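/- Let p be an odd prime and a the rooted p-cycle automorphism of the p-regular tree. Then the normaliser of A = ⟨a⟩ in Aut(X*) equals κ_1(Aut(X*)) ⋊ rooted(Nor_{Sym(X)}(Σ)), where Σ = ⟨σ⟩. -/

import Mathlib

/-!  Automorphisms of the `p`-regular rooted tree `X*`, `X = {0, …, p-1} = ℤ/pℤ`, encoded by
their portraits: an automorphism is the collection of its labels `g|^v ∈ Sym(X)`, `v ∈ X*`. -/

/-- The automorphism group of the `p`-regular rooted tree, encoded via portraits. -/
def TreeAut (p : ℕ) := List (ZMod p) → Equiv.Perm (ZMod p)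

instance {p : ℕ} : CoeFun (TreeAut p) (fun _ => List (ZMod p) → Equiv.Perm (ZMod p)) :=
  ⟨fun g => g⟩

/-- The action of a portrait on the words of the tree. -/
def pact {p : ℕ} : TreeAut p → List (ZMod p) → List (ZMod p)
  | _, [] => []
  | L, x :: v => L [] x :: pact (fun w => L (x :: w)) v

/-- The inverse action of a portrait on the words of the tree. -/
def pactInv {p : ℕ} : TreeAut p → List (ZMod p) → List (ZMod p)
  | _, [] => []
  | L, y :: v => (L [])⁻¹ y :: pactInv (fun w => L ((L [])⁻¹ y :: w)) v

theorem pactInv_pact {p : ℕ} (L : TreeAut p) (v : List (ZMod p)) :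
    pactInv L (pact L v) = v := by
  induction v generalizing L with
  | nil => rfl
  | cons x v ih => simp [pact, pactInv]; exact ih _

theorem pact_pactInv {p : ℕ} (L : TreeAut p) (v : List (ZMod p)) :
    pact L (pactInv L v) = v := by
  induction v generalizing L with
  | nil => rfl
  | cons x v ih => simp [pact, pactInv]; exact ih _

theorem pact_one {p : ℕ} (v : List (ZMod p)) :
    pact (fun _ => 1 : TreeAut p) v = v := by
  induction v with
  | nil => rfl
  | cons x v ih => simpa [pact] using ih

theorem pact_mulP {p : ℕ} (L M : TreeAut p) (v : List (ZMod p)) :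
    pact (fun u => L (pact M u) * M u) v = pact L (pact M v) := by
  induction v generalizing L M with
  | nil => rfl
  | cons x v ih =>
    simp only [pact, Equiv.Perm.mul_apply]
    exact congrArg _ (ih (fun u => L ((M []) x :: u)) (fun w => M (x :: w)))

instance {p : ℕ} : One (TreeAut p) := ⟨fun _ => 1⟩
instance {p : ℕ} : Mul (TreeAut p) := ⟨fun L M => fun v => L (pact M v) * M v⟩
instance {p : ℕ} : Inv (TreeAut p) := ⟨fun L => fun v => (L (pactInv L v))⁻¹⟩

theorem TreeAut.mul_def {p : ℕ} (L M : TreeAut p) (v : List (ZMod p)) :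
    (L * M) v = L (pact M v) * M v := rfl
theorem TreeAut.one_def {p : ℕ} (v : List (ZMod p)) : (1 : TreeAut p) v = 1 := rfl
theorem TreeAut.inv_def {p : ℕ} (L : TreeAut p) (v : List (ZMod p)) :
    L⁻¹ v = (L (pactInv L v))⁻¹ := rfl

instance {p : ℕ} : Group (TreeAut p) where
  mul_assoc a b c := by
    funext v
    show (a * b) (pact c v) * c v = a (pact (b * c) v) * ((b * c) v)
    show a (pact b (pact c v)) * b (pact c v) * c v
        = a (pact (fun u => b (pact c u) * c u) v) * (b (pact c v) * c v)
    rw [pact_mulP, mul_assoc]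
  one_mul a := by
    funext v
    show (1 : TreeAut p) (pact a v) * a v = a v
    simp [TreeAut.one_def]
  mul_one a := by
    funext v
    show a (pact (fun _ => 1) v) * (1 : Equiv.Perm (ZMod p)) = a v
    rw [pact_one, mul_one]
  inv_mul_cancel a := by
    funext v
    show (a (pactInv a (pact a v)))⁻¹ * a v = (1 : TreeAut p) v
    rw [pactInv_pact, TreeAut.one_def, inv_mul_cancel]

/-- The rooted automorphism with label `σ` at the root and trivial labels elsewhere. -/
def rootedAut {p : ℕ} (σ : Equiv.Perm (ZMod p)) : TreeAut p :=
  fun v => if v = [] then σ else 1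

/-- The rooted automorphism `a` given by the `p`-cycle `σ = (0 1 … p-1)`, `x ↦ x + 1`. -/
def aAut (p : ℕ) : TreeAut p := rootedAut (Equiv.addRight (1 : ZMod p))

/-- The section `g|_x` of `g` at the first-layer vertex `x`. -/
def sect {p : ℕ} (g : TreeAut p) (x : ZMod p) : TreeAut p := fun v => g (x :: v)

/-- The `n`-th diagonal `κ_n(g) = ψ_n⁻¹(g, …, g)`. -/
def kappa {p : ℕ} (n : ℕ) (g : TreeAut p) : TreeAut p :=
  fun v => if n ≤ v.length then g (v.drop n) else 1

/-- `ψ_n⁻¹(g, 1, …, 1)`: the automorphism acting as `g` below the vertex `0^n` and trivially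
elsewhere. -/
def embAt {p : ℕ} (n : ℕ) (g : TreeAut p) : TreeAut p :=
  fun v => if List.replicate n (0 : ZMod p) <+: v then g (v.drop n) else 1

/-- The scalar product of two vectors in `𝔽_p^r`. -/
def dotp {p r : ℕ} (n m : Fin r → ZMod p) : ZMod p := ∑ j, n j * m j

/-- The directed generator `b^n` of the multi-GGS group with defining data
`e : ℤ/pℤ → 𝔽_p^r` (the columns of the matrix `E`, with `e 0 = 0`): it satisfies
`ψ_1(b^n) = (b^n, a^{n·e_1}, …, a^{n·e_{p-1}})`. -/
def bAut {p r : ℕ} (e : ZMod p → Fin r → ZMod p) (n : Fin r → ZMod p) : TreeAut p :=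
  fun v =>
    match v.getLast? with
    | none => 1
    | some i =>
      if ∀ x ∈ v.dropLast, x = 0 then Equiv.addRight (dotp n (e i)) else 1

/-- The multi-GGS group `G_E = ⟨A ∪ B⟩` associated to the data `e`. -/
def GGS {p r : ℕ} (e : ZMod p → Fin r → ZMod p) : Subgroup (TreeAut p) :=
  Subgroup.closure ({aAut p} ∪ Set.range (bAut e))

open scoped commutatorElement

/-- The element `c̲ = ψ_1⁻¹([b^{s_1}, a], 1, …, 1)`. -/
def cAut {p r : ℕ} (e : ZMod p → Fin r → ZMod p) : TreeAut p :=
  embAt 1 ⁅bAut e (fun j => if (j : ℕ) = 0 then 1 else 0), aAut p⁆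

/-- The regularisation `G_reg = ⟨G ∪ {c̲}⟩` of a multi-GGS group. -/
def GGSreg {p r : ℕ} (e : ZMod p → Fin r → ZMod p) : Subgroup (TreeAut p) :=
  Subgroup.closure ({aAut p, cAut e} ∪ Set.range (bAut e))

/-- The word length on `Aut(X*)` with respect to the generating set `A ∪ B` of the multi-GGS
group determined by `e`. -/
noncomputable def ggsLength {p r : ℕ} (e : ZMod p → Fin r → ZMod p) (g : TreeAut p) : ℕ :=
  sInf {m | ∃ l : List (TreeAut p),
    (∀ x ∈ l, x ∈ Subgroup.zpowers (aAut p) ∨ x ∈ Set.range (bAut e)) ∧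
    l.length = m ∧ l.prod = g}

/-- `e` defines a *non-constant* multi-GGS group: the defining space `E` is not the line of
constant vectors. -/
def NonConstant {p r : ℕ} (e : ZMod p → Fin r → ZMod p) : Prop :=
  (∃ i j : ZMod p, i ≠ 0 ∧ j ≠ 0 ∧ e i ≠ e j) ∧
    LinearIndependent (ZMod p) (fun j : Fin r => fun i : ZMod p => e i j)

/-- `e` defines a *symmetric* GGS group: `r = 1`, the defining space is contained in the
symmetric subspace `{λ : λ_i = λ_{p-i}}`, and the group is non-constant. -/
def IsSymmetricGGS {p r : ℕ} (e : ZMod p → Fin r → ZMod p) : Prop :=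
  r = 1 ∧ (∀ (i : ZMod p) (j : Fin r), e i j = e (-i) j) ∧ NonConstant e

/-- `e` defines a *regular* multi-GGS group: non-constant and not symmetric. -/
def IsRegularGGS {p r : ℕ} (e : ZMod p → Fin r → ZMod p) : Prop :=
  NonConstant e ∧ ¬ IsSymmetricGGS e


/-! ### Auxiliary lemmas for the normalizer theorem -/

section NormalizerAux

variable {p : ℕ}

theorem myRootedAut_nil (τ : Equiv.Perm (ZMod p)) : rootedAut τ [] = τ := rfl

theorem myRootedAut_cons (τ : Equiv.Perm (ZMod p)) (x : ZMod p) (w : List (ZMod p)) :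
    rootedAut τ (x :: w) = 1 := by simp [rootedAut]

theorem myPact_cons (L : TreeAut p) (x : ZMod p) (w : List (ZMod p)) :
    pact L (x :: w) = L [] x :: pact (fun u => L (x :: u)) w := rfl

theorem myPact_rootedAut_cons (τ : Equiv.Perm (ZMod p)) (x : ZMod p) (w : List (ZMod p)) :
    pact (rootedAut τ) (x :: w) = τ x :: w := by
  show rootedAut τ [] x :: pact (fun u => rootedAut τ (x :: u)) w = τ x :: w
  have h : (fun u => rootedAut τ (x :: u)) = (fun _ => (1 : Equiv.Perm (ZMod p))) := by
    funext u; simp [rootedAut]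
  rw [h, pact_one]; rfl

/-- `rootedAut` as a group homomorphism. -/
def rootedHom (p : ℕ) : Equiv.Perm (ZMod p) →* TreeAut p where
  toFun := rootedAut
  map_one' := by
    funext v
    cases v with
    | nil => rfl
    | cons x w =>
      show rootedAut 1 (x :: w) = (1 : TreeAut p) (x :: w)
      rw [myRootedAut_cons]; rfl
  map_mul' := fun τ υ => by
    funext v
    show rootedAut (τ * υ) v = rootedAut τ (pact (rootedAut υ) v) * rootedAut υ v
    cases v with
    | nil => rfl
    | cons x w =>
      rw [myPact_rootedAut_cons, myRootedAut_cons, myRootedAut_cons, myRootedAut_cons, mul_one]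

theorem myRootedAut_mul (s t : Equiv.Perm (ZMod p)) :
    rootedAut (s * t) = rootedAut s * rootedAut t := map_mul (rootedHom p) s t

theorem myRootedAut_inv (s : Equiv.Perm (ZMod p)) :
    rootedAut s⁻¹ = (rootedAut s)⁻¹ := map_inv (rootedHom p) s

theorem aAut_zpow (k : ℤ) :
    aAut p ^ k = rootedAut (Equiv.addRight (1 : ZMod p) ^ k) :=
  (map_zpow (rootedHom p) (Equiv.addRight (1 : ZMod p)) k).symm

theorem myKappa_one_nil (h : TreeAut p) : kappa 1 h [] = 1 := rfl

theorem myKappa_one_cons (h : TreeAut p) (x : ZMod p) (w : List (ZMod p)) :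
    kappa 1 h (x :: w) = h w := by simp [kappa]

theorem kappa_commute (h : TreeAut p) (s : Equiv.Perm (ZMod p)) :
    Commute (kappa 1 h) (rootedAut s) := by
  show kappa 1 h * rootedAut s = rootedAut s * kappa 1 h
  funext v
  rw [TreeAut.mul_def, TreeAut.mul_def]
  cases v with
  | nil =>
    rw [show pact (rootedAut s) [] = [] from rfl, show pact (kappa 1 h) [] = [] from rfl,
      myKappa_one_nil, myRootedAut_nil, one_mul, mul_one]
  | cons x w =>
    rw [myPact_rootedAut_cons, myRootedAut_cons, mul_one, myKappa_one_cons,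
      myPact_cons (kappa 1 h), myRootedAut_cons, one_mul, myKappa_one_cons]

theorem kappa_mul_rooted_nil (h : TreeAut p) (τ : Equiv.Perm (ZMod p)) :
    (kappa 1 h * rootedAut τ) [] = τ := by
  rw [TreeAut.mul_def, show pact (rootedAut τ) [] = [] from rfl, myKappa_one_nil, one_mul,
    myRootedAut_nil]

theorem kappa_mul_rooted_cons (h : TreeAut p) (τ : Equiv.Perm (ZMod p)) (x : ZMod p)
    (w : List (ZMod p)) : (kappa 1 h * rootedAut τ) (x :: w) = h w := by
  rw [TreeAut.mul_def, myPact_rootedAut_cons, myKappa_one_cons, myRootedAut_cons, mul_one]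

theorem conj_rooted (h : TreeAut p) (τ s : Equiv.Perm (ZMod p)) :
    (kappa 1 h * rootedAut τ) * rootedAut s * (kappa 1 h * rootedAut τ)⁻¹
      = rootedAut (τ * s * τ⁻¹) := by
  rw [myRootedAut_mul, myRootedAut_mul, myRootedAut_inv, mul_inv_rev]
  have cK : Commute (kappa 1 h) (rootedAut τ * rootedAut s * (rootedAut τ)⁻¹) :=
    ((kappa_commute h τ).mul_right (kappa_commute h s)).mul_right (kappa_commute h τ).inv_right
  calc kappa 1 h * rootedAut τ * rootedAut s * ((rootedAut τ)⁻¹ * (kappa 1 h)⁻¹)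
      = kappa 1 h * (rootedAut τ * rootedAut s * (rootedAut τ)⁻¹) * (kappa 1 h)⁻¹ := by group
    _ = rootedAut τ * rootedAut s * (rootedAut τ)⁻¹ * kappa 1 h * (kappa 1 h)⁻¹ := by rw [cK.eq]
    _ = rootedAut τ * rootedAut s * (rootedAut τ)⁻¹ := by group

theorem conj_rooted_inv (h : TreeAut p) (τ s : Equiv.Perm (ZMod p)) :
    (kappa 1 h * rootedAut τ)⁻¹ * rootedAut s * (kappa 1 h * rootedAut τ)
      = rootedAut (τ⁻¹ * s * τ) := by
  have key := conj_rooted h τ (τ⁻¹ * s * τ)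
  have e : τ * (τ⁻¹ * s * τ) * τ⁻¹ = s := by group
  rw [e] at key
  rw [← key]; group

theorem addRight_one_pow (n : ℕ) :
    (Equiv.addRight (1 : ZMod p)) ^ n = Equiv.addRight (n : ZMod p) := by
  induction n with
  | zero => ext x; simp
  | succ n ih =>
    ext x
    rw [pow_succ]
    simp only [Equiv.Perm.mul_apply, ih, Equiv.coe_addRight]
    push_cast
    ring

theorem addRight_one_ne_one [Fact p.Prime] : (Equiv.addRight (1 : ZMod p)) ≠ 1 := by
  intro hcon
  have h0 : (Equiv.addRight (1 : ZMod p)) 0 = (1 : Equiv.Perm (ZMod p)) 0 := by rw [hcon]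
  simp only [Equiv.coe_addRight, zero_add, Equiv.Perm.one_apply] at h0
  exact one_ne_zero h0

theorem orderOf_addRight_one [Fact p.Prime] :
    orderOf (Equiv.addRight (1 : ZMod p)) = p := by
  apply orderOf_eq_prime
  · rw [addRight_one_pow, ZMod.natCast_self]
    ext x; simp
  · exact addRight_one_ne_one

/-- If `σ^k ≠ 1` then every power of `σ` is a power of `σ^k`. -/
theorem sigma_zpow_mem [Fact p.Prime] {k : ℤ}
    (hk : (Equiv.addRight (1 : ZMod p)) ^ k ≠ 1) (m : ℤ) :
    ∃ j : ℤ, ((Equiv.addRight (1 : ZMod p)) ^ k) ^ j = (Equiv.addRight (1 : ZMod p)) ^ m := by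
  set σ := Equiv.addRight (1 : ZMod p) with hσ
  have hord : orderOf σ = p := orderOf_addRight_one
  have hpk : ¬ ((p : ℤ) ∣ k) := by
    intro hd
    exact hk (orderOf_dvd_iff_zpow_eq_one.mp (by rw [hord]; exact hd))
  have hk0 : (k : ZMod p) ≠ 0 := fun hc => hpk ((ZMod.intCast_zmod_eq_zero_iff_dvd k p).mp hc)
  refine ⟨((((m : ZMod p) * (k : ZMod p)⁻¹).val : ℕ) : ℤ), ?_⟩
  set j : ℤ := ((((m : ZMod p) * (k : ZMod p)⁻¹).val : ℕ) : ℤ) with hj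
  have hcast : ((k * j - m : ℤ) : ZMod p) = 0 := by
    push_cast [hj, ZMod.natCast_val, ZMod.cast_id]
    rw [mul_comm ((m : ZMod p)) ((k : ZMod p))⁻¹, ← mul_assoc, mul_inv_cancel₀ hk0, one_mul,
      sub_self]
  have hdvd : (p : ℤ) ∣ (k * j - m) := (ZMod.intCast_zmod_eq_zero_iff_dvd _ p).mp hcast
  have hone : σ ^ (k * j - m) = 1 := by
    rw [← orderOf_dvd_iff_zpow_eq_one, hord]; exact hdvd
  rw [zpow_sub, mul_inv_eq_one] at hone
  rw [← zpow_mul, hone]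

theorem tau_mem_normalizer [Fact p.Prime] {τ : Equiv.Perm (ZMod p)} {k : ℤ}
    (hconj : τ * Equiv.addRight (1 : ZMod p) * τ⁻¹ = (Equiv.addRight (1 : ZMod p)) ^ k)
    (hk : (Equiv.addRight (1 : ZMod p)) ^ k ≠ 1) :
    τ ∈ Subgroup.normalizer
      (Subgroup.zpowers (Equiv.addRight (1 : ZMod p)) : Set (Equiv.Perm (ZMod p))) := by
  set σ := Equiv.addRight (1 : ZMod p) with hσ
  rw [Subgroup.mem_normalizer_iff]
  intro s
  constructor
  · intro hs
    obtain ⟨m, rfl⟩ := Subgroup.mem_zpowers_iff.mp hs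
    refine Subgroup.mem_zpowers_iff.mpr ⟨k * m, ?_⟩
    calc σ ^ (k * m) = (σ ^ k) ^ m := by rw [zpow_mul]
      _ = (τ * σ * τ⁻¹) ^ m := by rw [hconj]
      _ = τ * σ ^ m * τ⁻¹ := conj_zpow
  · intro hs
    obtain ⟨m, hm⟩ := Subgroup.mem_zpowers_iff.mp hs
    obtain ⟨j, hjj⟩ := sigma_zpow_mem hk m
    refine Subgroup.mem_zpowers_iff.mpr ⟨j, ?_⟩
    have h1 : τ * σ ^ j * τ⁻¹ = τ * s * τ⁻¹ := by
      rw [← conj_zpow, hconj, hjj, hm]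
    exact mul_left_cancel (mul_right_cancel h1)

end NormalizerAux

/-- Let `p` be an odd prime and `a` the rooted `p`-cycle automorphism of the `p`-regular
tree.  Then the normaliser of `A = ⟨a⟩` in `Aut(X*)` equals
`κ_1(Aut(X*)) ⋊ rooted(Nor_{Sym(X)}(Σ))`, where `Σ = ⟨σ⟩`. -/
theorem normalizer_rooted_a (p : ℕ) [Fact p.Prime] (hp : Odd p) (g : TreeAut p) :
    g ∈ Subgroup.normalizer (Subgroup.zpowers (aAut p) : Set (TreeAut p)) ↔
      ∃ (h : TreeAut p) (τ : Equiv.Perm (ZMod p)),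
        τ ∈ Subgroup.normalizer
          (Subgroup.zpowers (Equiv.addRight (1 : ZMod p)) : Set (Equiv.Perm (ZMod p))) ∧
        g = kappa 1 h * rootedAut τ := by
  constructor
  · intro hg
    have ha : aAut p = rootedAut (Equiv.addRight (1 : ZMod p)) := rfl
    obtain ⟨k, hk⟩ := Subgroup.mem_zpowers_iff.mp
      ((Subgroup.mem_normalizer_iff.mp hg (aAut p)).mp (Subgroup.mem_zpowers _))
    have hmul : g * aAut p = aAut p ^ k * g := by
      rw [hk]; group
    -- root label equation
    have hroot : g [] * Equiv.addRight (1 : ZMod p) = (Equiv.addRight (1 : ZMod p)) ^ k * g [] := by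
      have hv := congrFun hmul []
      rw [TreeAut.mul_def, TreeAut.mul_def, aAut_zpow] at hv
      exact hv
    -- first-level sections equation
    have hstep : ∀ (x : ZMod p) (w : List (ZMod p)), g ((x + 1) :: w) = g (x :: w) := by
      intro x w
      have hv := congrFun hmul (x :: w)
      rw [TreeAut.mul_def, TreeAut.mul_def, aAut_zpow, ha, myPact_rootedAut_cons,
        myRootedAut_cons, mul_one, myPact_cons g, myRootedAut_cons, one_mul] at hv
      simpa using hv
    have hconst : ∀ (x : ZMod p) (w : List (ZMod p)), g (x :: w) = g (0 :: w) := by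
      have key : ∀ (n : ℕ) (w : List (ZMod p)), g (((n : ZMod p)) :: w) = g (0 :: w) := by
        intro n
        induction n with
        | zero => intro w; norm_num
        | succ n ih =>
          intro w
          have h1 := hstep ((n : ZMod p)) w
          rw [ih] at h1
          have h2 : ((n + 1 : ℕ) : ZMod p) = (n : ZMod p) + 1 := by push_cast; ring
          rw [h2]
          exact h1
      intro x w
      have h3 := key x.val w
      rwa [ZMod.natCast_val, ZMod.cast_id] at h3
    have hk1 : (Equiv.addRight (1 : ZMod p)) ^ k ≠ 1 := by
      intro h1
      have h2 : g [] * Equiv.addRight (1 : ZMod p) = g [] * 1 := by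
        rw [hroot, h1, one_mul, mul_one]
      exact addRight_one_ne_one (mul_left_cancel h2)
    have hconj : g [] * Equiv.addRight (1 : ZMod p) * (g [])⁻¹
        = (Equiv.addRight (1 : ZMod p)) ^ k := by
      rw [hroot]; group
    refine ⟨fun w => g (0 :: w), g [], tau_mem_normalizer hconj hk1, ?_⟩
    funext v
    cases v with
    | nil => exact (kappa_mul_rooted_nil _ _).symm
    | cons x w => exact (hconst x w).trans (kappa_mul_rooted_cons (fun w => g (0 :: w)) (g []) x w).symm
  · rintro ⟨h, τ, hτ, rfl⟩
    rw [Subgroup.mem_normalizer_iff]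
    intro n
    constructor
    · intro hn
      obtain ⟨m, rfl⟩ := Subgroup.mem_zpowers_iff.mp hn
      obtain ⟨j, hj⟩ := Subgroup.mem_zpowers_iff.mp
        ((Subgroup.mem_normalizer_iff.mp hτ ((Equiv.addRight (1 : ZMod p)) ^ m)).mp
          (Subgroup.mem_zpowers_iff.mpr ⟨m, rfl⟩))
      refine Subgroup.mem_zpowers_iff.mpr ⟨j, ?_⟩
      rw [aAut_zpow, aAut_zpow, conj_rooted, ← hj]
    · intro hn
      obtain ⟨m, hm⟩ := Subgroup.mem_zpowers_iff.mp hn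
      obtain ⟨j, hj⟩ := Subgroup.mem_zpowers_iff.mp
        ((Subgroup.mem_normalizer_iff.mp (Subgroup.inv_mem _ hτ)
            ((Equiv.addRight (1 : ZMod p)) ^ m)).mp
          (Subgroup.mem_zpowers_iff.mpr ⟨m, rfl⟩))
      rw [inv_inv] at hj
      have hn' : n = (kappa 1 h * rootedAut τ)⁻¹ * (aAut p ^ m) * (kappa 1 h * rootedAut τ) := by
        rw [hm]; group
      refine Subgroup.mem_zpowers_iff.mpr ⟨j, ?_⟩
      rw [hn', aAut_zpow, aAut_zpow, conj_rooted_inv, ← hj]
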